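/- Fix real parameters a3, a6, a7, b1, b2, w1, w2 with a3 > 0, a6 > 0, a7 > 0. If x = (c3, s3, c6, s6, c7, s7) ∈ ℝ^6 is a singular configuration of the subsystem 367 (i.e. H(x) = 0 and the 5×6 Jacobian of H at x has rank < 5), then c6 = 0, s6^2 = 1, and either (c3 = c7 and s3 = s7) or (c3 = -c7 and s3 = -s7). -/

import Mathlib

/-- The Jacobian matrix of a map `f : ℝ^n → ℝ^m` at a point `x`,
whose `(i, j)` entry is the partial derivative of the `i`-th component of `f`
with respect to the `j`-th variable. -/
noncomputable def jacobian {n m : ℕ} (f : (Fin n → ℝ) → Fin m → ℝ) (x : Fin n → ℝ) :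
    Matrix (Fin m) (Fin n) ℝ :=
  Matrix.of fun i j => fderiv ℝ (fun y => f y i) x (Pi.single j 1)

/-- The constraint map `H : ℝ^6 → ℝ^5` of the subsystem 367, in the variables
`(c3, s3, c6, s6, c7, s7)`. -/
noncomputable def H367 (a3 a6 a7 b1 b2 w1 w2 : ℝ) (x : Fin 6 → ℝ) : Fin 5 → ℝ :=
  ![a6 * (x 2 * x 4 - x 3 * x 5) + a7 * x 5 - a3 * x 1 + w1 - b1,
    a6 * (x 3 * x 4 + x 2 * x 5) - a7 * x 4 + a3 * x 0 + w2 - b2,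
    x 0 ^ 2 + x 1 ^ 2 - 1,
    x 2 ^ 2 + x 3 ^ 2 - 1,
    x 4 ^ 2 + x 5 ^ 2 - 1]

set_option maxHeartbeats 1000000
set_option linter.unnecessarySeqFocus false
open ContinuousLinearMap Matrix

lemma c5_two {α : Type*} (a b c d e : α) : ![a,b,c,d,e] 2 = c := rfl
lemma c5_three {α : Type*} (a b c d e : α) : ![a,b,c,d,e] 3 = d := rfl
lemma c5_four {α : Type*} (a b c d e : α) : ![a,b,c,d,e] 4 = e := rfl

lemma cons_val_five' {α : Type*} (a b c d e f : α) : ![a,b,c,d,e,f] 5 = f := rfl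
lemma cons_val_four' {α : Type*} (a b c d e f : α) : ![a,b,c,d,e,f] 4 = e := rfl
lemma cons_val_three' {α : Type*} (a b c d e f : α) : ![a,b,c,d,e,f] 3 = d := rfl
lemma cons_val_two' {α : Type*} (a b c d e f : α) : ![a,b,c,d,e,f] 2 = c := rfl

lemma jac_eq (a3 a6 a7 b1 b2 w1 w2 : ℝ) (x : Fin 6 → ℝ) :
    jacobian (H367 a3 a6 a7 b1 b2 w1 w2) x =
    ![![0, -a3, a6 * x 4, -(a6 * x 5), a6 * x 2, a7 - a6 * x 3],
      ![a3, 0, a6 * x 5, a6 * x 4, a6 * x 3 - a7, a6 * x 2],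
      ![2 * x 0, 2 * x 1, 0, 0, 0, 0],
      ![0, 0, 2 * x 2, 2 * x 3, 0, 0],
      ![0, 0, 0, 0, 2 * x 4, 2 * x 5]] := by
  have P : ∀ i : Fin 6, HasFDerivAt (fun y : Fin 6 → ℝ => y i)
      (proj i : (Fin 6 → ℝ) →L[ℝ] ℝ) x := fun i => (proj i : (Fin 6 → ℝ) →L[ℝ] ℝ).hasFDerivAt
  have h0 : HasFDerivAt (fun y : Fin 6 → ℝ => H367 a3 a6 a7 b1 b2 w1 w2 y 0)
      ((a6 • ((x 2 • proj 4 + x 4 • proj 2) - (x 3 • proj 5 + x 5 • proj 3)) +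
        a7 • (proj 5 : (Fin 6 → ℝ) →L[ℝ] ℝ)) - a3 • proj 1) x := by
    simpa [H367] using
      (((((P 2).mul (P 4)).sub ((P 3).mul (P 5))).const_mul a6).add
        ((P 5).const_mul a7)).sub ((P 1).const_mul a3) |>.add_const w1 |>.sub_const b1
  have h1 : HasFDerivAt (fun y : Fin 6 → ℝ => H367 a3 a6 a7 b1 b2 w1 w2 y 1)
      ((a6 • ((x 3 • proj 4 + x 4 • proj 3) + (x 2 • proj 5 + x 5 • proj 2)) -
        a7 • (proj 4 : (Fin 6 → ℝ) →L[ℝ] ℝ)) + a3 • proj 0) x := by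
    simpa [H367] using
      (((((P 3).mul (P 4)).add ((P 2).mul (P 5))).const_mul a6).sub
        ((P 4).const_mul a7)).add ((P 0).const_mul a3) |>.add_const w2 |>.sub_const b2
  have sq : ∀ i : Fin 6, HasFDerivAt (fun y : Fin 6 → ℝ => y i ^ 2)
      ((2 * x i) • (proj i : (Fin 6 → ℝ) →L[ℝ] ℝ)) x := by
    intro i
    have : HasFDerivAt (fun y : Fin 6 → ℝ => y i * y i) (x i • (proj i : (Fin 6 → ℝ) →L[ℝ] ℝ) + x i • proj i) x := (P i).mul (P i)
    convert this using 1
    · ext y; ring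
    · ext y; simp [two_mul, add_smul]
  have h2 : HasFDerivAt (fun y : Fin 6 → ℝ => H367 a3 a6 a7 b1 b2 w1 w2 y 2)
      ((2 * x 0) • (proj 0 : (Fin 6 → ℝ) →L[ℝ] ℝ) + (2 * x 1) • proj 1) x := by
    simpa [H367] using ((sq 0).add (sq 1)).sub_const 1
  have h3 : HasFDerivAt (fun y : Fin 6 → ℝ => H367 a3 a6 a7 b1 b2 w1 w2 y 3)
      ((2 * x 2) • (proj 2 : (Fin 6 → ℝ) →L[ℝ] ℝ) + (2 * x 3) • proj 3) x := by
    simpa [H367] using ((sq 2).add (sq 3)).sub_const 1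
  have h4 : HasFDerivAt (fun y : Fin 6 → ℝ => H367 a3 a6 a7 b1 b2 w1 w2 y 4)
      ((2 * x 4) • (proj 4 : (Fin 6 → ℝ) →L[ℝ] ℝ) + (2 * x 5) • proj 5) x := by
    simpa [H367] using ((sq 4).add (sq 5)).sub_const 1
  have hproj : ∀ (i j : Fin 6), (proj i : (Fin 6 → ℝ) →L[ℝ] ℝ) (Pi.single j 1) = if i = j then 1 else 0 := by
    intro i j
    simp [Pi.single_apply, eq_comm]
  funext i j
  fin_cases i <;> fin_cases j <;>
    simp only [jacobian, Matrix.of_apply, Fin.reduceFinMk, Fin.zero_eta, Fin.mk_one, Fin.isValue,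
      h0.fderiv, h1.fderiv, h2.fderiv, h3.fderiv, h4.fderiv,
      ContinuousLinearMap.add_apply, ContinuousLinearMap.sub_apply, ContinuousLinearMap.smul_apply, hproj, Fin.reduceEq, Matrix.cons_val] <;>
    norm_num [cons_val_five', cons_val_four', cons_val_three', cons_val_two',
      Matrix.vecHead, Matrix.vecTail] <;> ring

/-- For positive rod lengths, every singular configuration of the subsystem 367
satisfies `c6 = 0`, `s6^2 = 1`, and `(c3, s3) = ±(c7, s7)`. -/
theorem singular367_structure (a3 a6 a7 b1 b2 w1 w2 : ℝ)
    (h3 : a3 > 0) (h6 : a6 > 0) (h7 : a7 > 0)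
    (c3 s3 c6 s6 c7 s7 : ℝ)
    (hH : H367 a3 a6 a7 b1 b2 w1 w2 ![c3, s3, c6, s6, c7, s7] = 0)
    (hrank : (jacobian (H367 a3 a6 a7 b1 b2 w1 w2) ![c3, s3, c6, s6, c7, s7]).rank < 5) :
    c6 = 0 ∧ s6 ^ 2 = 1 ∧ ((c3 = c7 ∧ s3 = s7) ∨ (c3 = -c7 ∧ s3 = -s7)) := by
  -- circle constraints from hH
  have k3 : c3 ^ 2 + s3 ^ 2 = 1 := by
    have := congrFun hH 2
    simp only [H367, c5_two, cons_val_zero, Matrix.cons_val_zero, Matrix.cons_val_one,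
      Matrix.head_cons, cons_val_two', cons_val_three', cons_val_four', cons_val_five',
      Pi.zero_apply] at this
    linarith
  have k6 : c6 ^ 2 + s6 ^ 2 = 1 := by
    have := congrFun hH 3
    simp only [H367, c5_three, Matrix.cons_val_zero, Matrix.cons_val_one,
      Matrix.head_cons, cons_val_two', cons_val_three', cons_val_four', cons_val_five',
      Pi.zero_apply] at this
    linarith
  have k7 : c7 ^ 2 + s7 ^ 2 = 1 := by
    have := congrFun hH 4
    simp only [H367, c5_four, Matrix.cons_val_zero, Matrix.cons_val_one,
      Matrix.head_cons, cons_val_two', cons_val_three', cons_val_four', cons_val_five',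
      Pi.zero_apply] at this
    linarith
  -- the explicit Jacobian
  set M : Matrix (Fin 5) (Fin 6) ℝ :=
    ![![0, -a3, a6 * c7, -(a6 * s7), a6 * c6, a7 - a6 * s6],
      ![a3, 0, a6 * s7, a6 * c7, a6 * s6 - a7, a6 * c6],
      ![2 * c3, 2 * s3, 0, 0, 0, 0],
      ![0, 0, 2 * c6, 2 * s6, 0, 0],
      ![0, 0, 0, 0, 2 * c7, 2 * s7]] with hMdef
  have hM : jacobian (H367 a3 a6 a7 b1 b2 w1 w2) ![c3, s3, c6, s6, c7, s7] = M := by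
    rw [jac_eq]
    simp only [hMdef, Matrix.cons_val_zero, Matrix.cons_val_one, Matrix.head_cons,
      cons_val_two', cons_val_three', cons_val_four', cons_val_five']
    rfl
  rw [hM] at hrank
  -- obtain a nonzero left null vector
  have hrT : (Mᵀ).rank < 5 := by rwa [Matrix.rank_transpose]
  have hker : LinearMap.ker (Mᵀ).mulVecLin ≠ ⊥ := by
    intro hbot
    have h1 := LinearMap.finrank_range_add_finrank_ker (Mᵀ).mulVecLin
    rw [hbot, finrank_bot, Module.finrank_fin_fun] at h1
    have : (Mᵀ).rank = Module.finrank ℝ (LinearMap.range (Mᵀ).mulVecLin) := rfl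
    omega
  obtain ⟨v, hvmem, hvne⟩ := (Submodule.ne_bot_iff _).mp hker
  have hv : Mᵀ.mulVec v = 0 := hvmem
  have E : ∀ j : Fin 6, M 0 j * v 0 + M 1 j * v 1 + M 2 j * v 2 + M 3 j * v 3 + M 4 j * v 4 = 0 := by
    intro j
    have := congrFun hv j
    simp only [Matrix.mulVec, dotProduct, Fin.sum_univ_five, Matrix.transpose_apply,
      Pi.zero_apply] at this
    linarith [this]
  have E0 := E 0; have E1 := E 1; have E2 := E 2; have E3 := E 3; have E4 := E 4; have E5 := E 5
  simp only [hMdef, Matrix.cons_val_zero, Matrix.cons_val_one, Matrix.head_cons,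
    c5_two, c5_three, c5_four,
    cons_val_two', cons_val_three', cons_val_four', cons_val_five'] at E0 E1 E2 E3 E4 E5
  -- v 2 ≠ 0
  have hv2 : v 2 ≠ 0 := by
    intro h0
    apply hvne
    have hv1 : v 1 = 0 := by
      have h' : a3 * v 1 = 0 := by linear_combination E0 - 2 * c3 * h0
      rcases mul_eq_zero.mp h' with h'' | h''
      · exact absurd h'' (ne_of_gt h3)
      · exact h''
    have hv0 : v 0 = 0 := by
      have h' : a3 * v 0 = 0 := by linear_combination -E1 + 2 * s3 * h0
      rcases mul_eq_zero.mp h' with h'' | h''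
      · exact absurd h'' (ne_of_gt h3)
      · exact h''
    have hv3 : v 3 = 0 := by
      have ha : 2 * c6 * v 3 = 0 := by linear_combination E2 - a6 * c7 * hv0 - a6 * s7 * hv1
      have hb : 2 * s6 * v 3 = 0 := by linear_combination E3 + a6 * s7 * hv0 - a6 * c7 * hv1
      have hsq : v 3 ^ 2 = 0 := by nlinarith [k6, sq_nonneg (v 3)]
      exact pow_eq_zero_iff two_ne_zero |>.mp hsq
    have hv4 : v 4 = 0 := by
      have ha : 2 * c7 * v 4 = 0 := by
        linear_combination E4 - a6 * c6 * hv0 - (a6 * s6 - a7) * hv1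
      have hb : 2 * s7 * v 4 = 0 := by
        linear_combination E5 - (a7 - a6 * s6) * hv0 - a6 * c6 * hv1
      have hsq : v 4 ^ 2 = 0 := by nlinarith [k7, sq_nonneg (v 4)]
      exact pow_eq_zero_iff two_ne_zero |>.mp hsq
    funext i
    fin_cases i <;> assumption
  -- key identities
  have A1 : a3 * (c6 * v 3) = a6 * v 2 * (s7 * c3 - c7 * s3) := by
    linear_combination (a3 / 2) * E2 + (a6 * c7 / 2) * E1 - (a6 * s7 / 2) * E0
  have A2 : a3 * (s6 * v 3) = a6 * v 2 * (c7 * c3 + s7 * s3) := by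
    linear_combination (a3 / 2) * E3 - (a6 * s7 / 2) * E1 - (a6 * c7 / 2) * E0
  have D1 : a3 * (c7 * v 4) = (a6 * s6 - a7) * c3 * v 2 - a6 * c6 * s3 * v 2 := by
    linear_combination (a3 / 2) * E4 + (a6 * c6 / 2) * E1 - ((a6 * s6 - a7) / 2) * E0
  have D2 : a3 * (s7 * v 4) = a6 * c6 * c3 * v 2 + (a6 * s6 - a7) * s3 * v 2 := by
    linear_combination (a3 / 2) * E5 + ((a7 - a6 * s6) / 2) * E1 - (a6 * c6 / 2) * E0
  have A3 : a3 * (v 4 * (s7 * c3 - c7 * s3)) = a6 * c6 * v 2 := by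
    linear_combination c3 * D2 - s3 * D1 + a6 * c6 * v 2 * k3
  have A4 : a3 * (v 4 * (c7 * c3 + s7 * s3)) = (a6 * s6 - a7) * v 2 := by
    linear_combination c3 * D1 + s3 * D2 + (a6 * s6 - a7) * v 2 * k3
  -- v 3 ≠ 0
  have hv3ne : v 3 ≠ 0 := by
    intro h0
    have hS0 : a6 * v 2 * (s7 * c3 - c7 * s3) = 0 := by
      linear_combination -A1 + a3 * c6 * h0
    have hC0 : a6 * v 2 * (c7 * c3 + s7 * s3) = 0 := by
      linear_combination -A2 + a3 * s6 * h0
    have hS1 : s7 * c3 - c7 * s3 = 0 := by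
      rcases mul_eq_zero.mp hS0 with h | h
      · rcases mul_eq_zero.mp h with h' | h'
        · exact absurd h' (ne_of_gt h6)
        · exact absurd h' hv2
      · exact h
    have hC1 : c7 * c3 + s7 * s3 = 0 := by
      rcases mul_eq_zero.mp hC0 with h | h
      · rcases mul_eq_zero.mp h with h' | h'
        · exact absurd h' (ne_of_gt h6)
        · exact absurd h' hv2
      · exact h
    have hcontr : (0:ℝ) = 1 := by
      linear_combination -(s7 * c3 - c7 * s3) * hS1 - (c7 * c3 + s7 * s3) * hC1 +
        (c7 ^ 2 + s7 ^ 2) * k3 + k7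
    norm_num at hcontr
  -- S = 0
  have hS : s7 * c3 - c7 * s3 = 0 := by
    by_contra hSne
    have P1 : (a3 ^ 2 * (v 3 * v 4) - a6 ^ 2 * v 2 ^ 2) * (s7 * c3 - c7 * s3) = 0 := by
      linear_combination (a3 * v 3) * A3 + (a6 * v 2) * A1
    have hP1 : a3 ^ 2 * (v 3 * v 4) = a6 ^ 2 * v 2 ^ 2 := by
      rcases mul_eq_zero.mp P1 with h | h
      · linarith [h]
      · exact absurd h hSne
    have P2 : a3 ^ 2 * (v 3 * v 4) * (c7 * c3 + s7 * s3) =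
        a6 ^ 2 * v 2 ^ 2 * (c7 * c3 + s7 * s3) - a3 * a7 * v 2 * v 3 := by
      linear_combination (a3 * v 3) * A4 + (a6 * v 2) * A2
    have hz : a3 * a7 * v 2 * v 3 = 0 := by
      linear_combination P2 - (c7 * c3 + s7 * s3) * hP1
    rcases mul_eq_zero.mp hz with h | h
    · rcases mul_eq_zero.mp h with h' | h'
      · rcases mul_eq_zero.mp h' with h'' | h''
        · exact absurd h'' (ne_of_gt h3)
        · exact absurd h'' (ne_of_gt h7)
      · exact absurd h' hv2
    · exact absurd h hv3ne
  -- c6 = 0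
  have hc6 : c6 = 0 := by
    have h0 : a3 * (c6 * v 3) = 0 := by linear_combination A1 + a6 * v 2 * hS
    rcases mul_eq_zero.mp h0 with h | h
    · exact absurd h (ne_of_gt h3)
    · rcases mul_eq_zero.mp h with h' | h'
      · exact h'
      · exact absurd h' hv3ne
  refine ⟨hc6, by nlinarith [k6], ?_⟩
  have hC2 : ((c7 * c3 + s7 * s3) - 1) * ((c7 * c3 + s7 * s3) + 1) = 0 := by
    linear_combination (c7 ^ 2 + s7 ^ 2) * k3 + k7 - (s7 * c3 - c7 * s3) * hS
  rcases mul_eq_zero.mp hC2 with h | h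
  · left
    have hCe : c7 * c3 + s7 * s3 = 1 := by linarith
    have hsum : (c3 - c7) ^ 2 + (s3 - s7) ^ 2 = 0 := by
      linear_combination k3 + k7 - 2 * hCe
    have h1 : (c3 - c7) ^ 2 = 0 := le_antisymm (by nlinarith [sq_nonneg (s3 - s7)]) (sq_nonneg _)
    have h2 : (s3 - s7) ^ 2 = 0 := le_antisymm (by nlinarith [sq_nonneg (c3 - c7)]) (sq_nonneg _)
    constructor
    · have := pow_eq_zero_iff two_ne_zero |>.mp h1; linarith
    · have := pow_eq_zero_iff two_ne_zero |>.mp h2; linarith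
  · right
    have hCe : c7 * c3 + s7 * s3 = -1 := by linarith
    have hsum : (c3 + c7) ^ 2 + (s3 + s7) ^ 2 = 0 := by
      linear_combination k3 + k7 + 2 * hCe
    have h1 : (c3 + c7) ^ 2 = 0 := le_antisymm (by nlinarith [sq_nonneg (s3 + s7)]) (sq_nonneg _)
    have h2 : (s3 + s7) ^ 2 = 0 := le_antisymm (by nlinarith [sq_nonneg (c3 + c7)]) (sq_nonneg _)
    constructor
    · have := pow_eq_zero_iff two_ne_zero |>.mp h1; linarith
    · have := pow_eq_zero_iff two_ne_zero |>.mp h2; linarith
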